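/- Off-diagonal coefficient identity for the coupled σ-model action (Equation (3.29)). For all r ≠ s in {1, …, N} and for each choice of sign ±, the quantity c^±_{rs} := ±(ℓ^∞/8) φ^r_±(z_r) φ^s_±(z_s) Σ_{i∈I_±} φ_∓(ζ_i) / (φ_±'(ζ_i) (z_r−ζ_i)(z_s−ζ_i)) satisfies c^±_{rs} = (ρ_rs + ρ_sr)/4. Equivalently, ±(ℓ^∞/8) (φ^r_±(z_r) φ^s_∓(z_s) − φ^r_∓(z_r) φ^s_±(z_s))/(z_r − z_s) = (ρ_rs + ρ_sr)/4. -/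

import Mathlib

open scoped BigOperators

/-- One of the two "halves" `φ_±(w) = ∏_{i ∈ I} (w - ζ_i) / ∏_r (w - z_r)` of the twist
function. -/
noncomputable def phiHalf {ι κ : Type*} [Fintype ι] [Fintype κ]
    (z : ι → ℂ) (ζ : κ → ℂ) (I : Finset κ) (w : ℂ) : ℂ :=
  (∏ i ∈ I, (w - ζ i)) / ∏ r, (w - z r)

/-- The function `φ^r_±(w) = (w - z_r) φ_±(w) = ∏_{i ∈ I} (w - ζ_i) / ∏_{s ≠ r} (w - z_s)`. -/
noncomputable def phiHalfR {ι κ : Type*} [Fintype ι] [DecidableEq ι] [Fintype κ]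
    (z : ι → ℂ) (ζ : κ → ℂ) (I : Finset κ) (r : ι) (w : ℂ) : ℂ :=
  (∏ i ∈ I, (w - ζ i)) / ∏ s ∈ Finset.univ.erase r, (w - z s)

/-- The coefficients `ρ_{rs}` of the coupled σ-model action (Equation (3.19)). -/
noncomputable def rhoCoef {ι κ : Type*} [Fintype ι] [DecidableEq ι] [Fintype κ]
    (linf : ℂ) (z : ι → ℂ) (ζ : κ → ℂ) (Ip Im : Finset κ) (r s : ι) : ℂ :=
  if r = s then
    linf / 4 * (deriv (phiHalfR z ζ Ip r) (z r) * phiHalfR z ζ Im r (z r)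
      - phiHalfR z ζ Ip r (z r) * deriv (phiHalfR z ζ Im r) (z r))
  else
    linf / 2 * phiHalfR z ζ Ip r (z r) * phiHalfR z ζ Im s (z s) / (z r - z s)



open Polynomial Finset in
lemma divdiff_zero (s : Finset ℂ) (p : ℂ[X]) (h : p.natDegree + 2 ≤ s.card) :
    ∑ x ∈ s, p.eval x / ∏ y ∈ s.erase x, (x - y) = 0 := by
  rcases eq_or_ne p 0 with rfl | hp0
  · simp
  have hinj : Set.InjOn (id : ℂ → ℂ) s := Function.injective_id.injOn
  have hdeg : p.degree < (s.card : ℕ) := by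
    exact (natDegree_lt_iff_degree_lt hp0).mp (by omega)
  have hint := Lagrange.eq_interpolate hinj hdeg
  have hc : p.coeff (s.card - 1) = 0 :=
    coeff_eq_zero_of_natDegree_lt (by omega)
  rw [hint, Lagrange.interpolate_apply] at hc
  rw [finset_sum_coeff] at hc
  have hcoeff : ∀ x ∈ s, (C (p.eval (id x)) * Lagrange.basis s id x).coeff (s.card - 1)
      = p.eval x / ∏ y ∈ s.erase x, (x - y) := by
    intro x hx
    rw [coeff_C_mul]
    have hbasis : Lagrange.basis s id x = C (∏ y ∈ s.erase x, (x - y)⁻¹) *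
        ∏ y ∈ s.erase x, (X - C y) := by
      unfold Lagrange.basis Lagrange.basisDivisor
      rw [prod_mul_distrib, ← map_prod]; rfl
    have hmon : (∏ y ∈ s.erase x, (X - C y)).Monic :=
      monic_prod_of_monic _ _ fun y _ => monic_X_sub_C y
    have hnd : (∏ y ∈ s.erase x, (X - C y)).natDegree = s.card - 1 := by
      rw [natDegree_prod _ _ fun y _ => X_sub_C_ne_zero y]
      simp [card_erase_of_mem hx]
    rw [hbasis, coeff_C_mul, ← hnd, hmon.coeff_natDegree, mul_one, prod_inv_distrib,
      div_eq_mul_inv]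
    rfl
  rw [Finset.sum_congr rfl hcoeff] at hc
  exact hc

open Polynomial Finset in
lemma deriv_phiHalf_at_root {ι κ : Type*} [Fintype ι] [Fintype κ] [DecidableEq κ]
    (z : ι → ℂ) (ζ : κ → ℂ) (I : Finset κ) (i : κ) (hi : i ∈ I)
    (hQ : (∏ r, (ζ i - z r)) ≠ 0) :
    deriv (phiHalf z ζ I) (ζ i)
      = (∏ j ∈ I.erase i, (ζ i - ζ j)) / ∏ r, (ζ i - z r) := by
  classical
  set P : ℂ[X] := ∏ j ∈ I, (X - C (ζ j)) with hP
  set Q : ℂ[X] := ∏ r, (X - C (z r)) with hQdef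
  have hfun : phiHalf z ζ I = fun w => P.eval w / Q.eval w := by
    funext w; simp [phiHalf, hP, hQdef, eval_prod]
  have hQe : Q.eval (ζ i) ≠ 0 := by simpa [hQdef, eval_prod] using hQ
  have hd : HasDerivAt (fun w => P.eval w / Q.eval w)
      ((P.derivative.eval (ζ i) * Q.eval (ζ i) - P.eval (ζ i) * Q.derivative.eval (ζ i))
        / (Q.eval (ζ i))^2) (ζ i) :=
    (P.hasDerivAt (ζ i)).div (Q.hasDerivAt (ζ i)) hQe
  rw [hfun, hd.deriv]
  have hPfac : P = (X - C (ζ i)) * ∏ j ∈ I.erase i, (X - C (ζ j)) :=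
    (Finset.mul_prod_erase I _ hi).symm
  have hPe : P.eval (ζ i) = 0 := by rw [hPfac]; simp
  have hPd : P.derivative.eval (ζ i) = ∏ j ∈ I.erase i, (ζ i - ζ j) := by
    rw [hPfac, derivative_mul]
    simp [eval_prod]
  have hQeval : Q.eval (ζ i) = ∏ r, (ζ i - z r) := by simp [hQdef, eval_prod]
  rw [hPe, hPd, hQeval]
  field_simp
  ring

open Polynomial Finset in
lemma key_sum {κ : Type*} [DecidableEq κ] (ζ : κ → ℂ) (A : Finset κ)
    (hζ : Set.InjOn ζ A) (a b : ℂ) (hab : a ≠ b)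
    (ha : ∀ i ∈ A, a ≠ ζ i) (hb : ∀ i ∈ A, b ≠ ζ i)
    (p : ℂ[X]) (hp : p.natDegree ≤ A.card) :
    ∑ i ∈ A, p.eval (ζ i) / ((∏ j ∈ A.erase i, (ζ i - ζ j)) * ((a - ζ i) * (b - ζ i)))
      = (p.eval b / ∏ j ∈ A, (b - ζ j) - p.eval a / ∏ j ∈ A, (a - ζ j)) / (a - b) := by
  classical
  set T : Finset ℂ := A.image ζ with hT
  have haT : a ∉ T := by
    simp only [hT, mem_image, not_exists]
    rintro i ⟨hi, hai⟩; exact ha i hi hai.symm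
  have hbT : b ∉ T := by
    simp only [hT, mem_image, not_exists]
    rintro i ⟨hi, hbi⟩; exact hb i hi hbi.symm
  set s : Finset ℂ := insert a (insert b T) with hs
  have hcard : s.card = A.card + 2 := by
    rw [hs, card_insert_of_notMem (by simp [haT, hab]),
      card_insert_of_notMem hbT, card_image_of_injOn hζ]
  have h0 := divdiff_zero s p (by omega)
  rw [hs, Finset.sum_insert (by simp [haT, hab]), Finset.sum_insert hbT] at h0
  have hea : (insert a (insert b T)).erase a = insert b T := by
    rw [Finset.erase_insert (by simp [haT, hab])]
  have heb : (insert a (insert b T)).erase b = insert a T := by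
    rw [Finset.insert_comm, Finset.erase_insert (by simp [hbT, hab.symm])]
  have hprodA : ∀ x : ℂ, ∏ j ∈ T, (x - j) = ∏ j ∈ A, (x - ζ j) := fun x =>
    Finset.prod_image fun i hi j hj hij => hζ hi hj hij
  have hta : p.eval a / ∏ y ∈ (insert a (insert b T)).erase a, (a - y)
      = p.eval a / ((a - b) * ∏ j ∈ A, (a - ζ j)) := by
    rw [hea, Finset.prod_insert hbT, hprodA]
  have htb : p.eval b / ∏ y ∈ (insert a (insert b T)).erase b, (b - y)
      = p.eval b / ((b - a) * ∏ j ∈ A, (b - ζ j)) := by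
    rw [heb, Finset.prod_insert haT, hprodA]
  have htT : ∑ x ∈ T, p.eval x / ∏ y ∈ (insert a (insert b T)).erase x, (x - y)
      = ∑ i ∈ A, p.eval (ζ i) / ((∏ j ∈ A.erase i, (ζ i - ζ j)) * ((a - ζ i) * (b - ζ i))) := by
    rw [hT, Finset.sum_image (fun i hi j hj hij => hζ hi hj hij)]
    refine Finset.sum_congr rfl fun i hi => ?_
    have hne_a : ζ i ≠ a := fun h => ha i hi h.symm
    have hne_b : ζ i ≠ b := fun h => hb i hi h.symm
    have herase : (insert a (insert b T)).erase (ζ i)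
        = insert a (insert b (T.erase (ζ i))) := by
      rw [Finset.erase_insert_of_ne hne_a.symm, Finset.erase_insert_of_ne hne_b.symm]
    have hTe : T.erase (ζ i) = (A.erase i).image ζ := by
      ext x
      simp only [mem_erase, hT, mem_image]
      constructor
      · rintro ⟨hx, j, hj, rfl⟩
        exact ⟨j, ⟨fun h => hx (by rw [h]), hj⟩, rfl⟩
      · rintro ⟨j, ⟨hji, hjA⟩, rfl⟩
        exact ⟨fun h => hji (hζ hjA hi h), j, hjA, rfl⟩
    have hprodE : ∏ j ∈ T.erase (ζ i), (ζ i - j) = ∏ j ∈ A.erase i, (ζ i - ζ j) := by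
      rw [hTe]
      exact Finset.prod_image fun x hx y hy hxy =>
        hζ (mem_of_mem_erase hx) (mem_of_mem_erase hy) hxy
    rw [herase, Finset.prod_insert (by simp [haT, hab, hne_a, Finset.mem_erase]),
      Finset.prod_insert (by simp [hbT, Finset.mem_erase]), hprodE]
    ring_nf
  rw [hta, htb, htT] at h0
  have hPa : (∏ j ∈ A, (a - ζ j)) ≠ 0 :=
    Finset.prod_ne_zero_iff.mpr fun j hj => sub_ne_zero.mpr (ha j hj)
  have hPb : (∏ j ∈ A, (b - ζ j)) ≠ 0 :=
    Finset.prod_ne_zero_iff.mpr fun j hj => sub_ne_zero.mpr (hb j hj)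
  have hab' : a - b ≠ 0 := sub_ne_zero.mpr hab
  have hba' : b - a ≠ 0 := sub_ne_zero.mpr hab.symm
  have hS : ∑ i ∈ A, p.eval (ζ i) / ((∏ j ∈ A.erase i, (ζ i - ζ j)) * ((a - ζ i) * (b - ζ i)))
      = -(p.eval a / ((a - b) * ∏ j ∈ A, (a - ζ j)))
        - p.eval b / ((b - a) * ∏ j ∈ A, (b - ζ j)) := by
    linear_combination h0
  rw [hS]
  field_simp
  ring

open Polynomial Finset in
lemma main_half {N : ℕ} (z : Fin N → ℂ) (ζ : Fin (2 * N) → ℂ)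
    (hdist : Function.Injective (Sum.elim z ζ : Fin N ⊕ Fin (2 * N) → ℂ))
    (A B : Finset (Fin (2 * N))) (hA : A.card = N) (hB : B.card = N)
    (r s : Fin N) (hrs : r ≠ s) :
    ∑ i ∈ A, phiHalf z ζ B (ζ i) /
        (deriv (phiHalf z ζ A) (ζ i) * ((z r - ζ i) * (z s - ζ i)))
      = ((∏ j ∈ B, (z s - ζ j)) / ∏ j ∈ A, (z s - ζ j)
         - (∏ j ∈ B, (z r - ζ j)) / ∏ j ∈ A, (z r - ζ j)) / (z r - z s) := by
  classical
  have hzζ : ∀ (t : Fin N) (j : Fin (2 * N)), z t ≠ ζ j := by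
    intro t j h
    have := hdist (a₁ := Sum.inl t) (a₂ := Sum.inr j) (by simpa using h)
    simp at this
  have hζinj : Function.Injective ζ := by
    intro i j h
    have := hdist (a₁ := Sum.inr i) (a₂ := Sum.inr j) (by simpa using h)
    simpa using this
  have hzinj : Function.Injective z := by
    intro i j h
    have := hdist (a₁ := Sum.inl i) (a₂ := Sum.inl j) (by simpa using h)
    simpa using this
  set p : ℂ[X] := ∏ j ∈ B, (X - C (ζ j)) with hp
  have hpdeg : p.natDegree = N := by
    rw [hp, natDegree_prod _ _ fun j _ => X_sub_C_ne_zero (ζ j)]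
    simp [hB]
  have hpeval : ∀ x : ℂ, p.eval x = ∏ j ∈ B, (x - ζ j) := by
    intro x; simp [hp, eval_prod]
  have hsummand : ∀ i ∈ A, phiHalf z ζ B (ζ i) /
        (deriv (phiHalf z ζ A) (ζ i) * ((z r - ζ i) * (z s - ζ i)))
      = p.eval (ζ i) / ((∏ j ∈ A.erase i, (ζ i - ζ j)) * ((z r - ζ i) * (z s - ζ i))) := by
    intro i hi
    have hQ : (∏ t, (ζ i - z t)) ≠ 0 :=
      Finset.prod_ne_zero_iff.mpr fun t _ => sub_ne_zero.mpr fun h => hzζ t i h.symm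
    rw [deriv_phiHalf_at_root z ζ A i hi hQ, hpeval]
    have hD : (∏ j ∈ A.erase i, (ζ i - ζ j)) ≠ 0 :=
      Finset.prod_ne_zero_iff.mpr fun j hj =>
        sub_ne_zero.mpr fun h => (Finset.mem_erase.mp hj).1 (hζinj h).symm
    have hX : (z r - ζ i) * (z s - ζ i) ≠ 0 :=
      mul_ne_zero (sub_ne_zero.mpr (hzζ r i)) (sub_ne_zero.mpr (hzζ s i))
    rw [phiHalf]
    field_simp
  rw [Finset.sum_congr rfl hsummand,
    key_sum ζ A hζinj.injOn (z r) (z s) (fun h => hrs (hzinj h))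
      (fun i _ => hzζ r i) (fun i _ => hzζ s i) p (by omega),
    hpeval, hpeval]


lemma alg_plus (linf A1 A2 B1 B2 Qr Qs D D' : ℂ)
    (ha1 : A1 ≠ 0) (ha2 : A2 ≠ 0) (hqr : Qr ≠ 0) (hqs : Qs ≠ 0) (hd : D ≠ 0)
    (hD' : D' = -D) :
    linf / 8 * (A1 / Qr) * (A2 / Qs) * ((B2 / A2 - B1 / A1) / D)
      = (linf / 2 * (A1 / Qr) * (B2 / Qs) / D + linf / 2 * (A2 / Qs) * (B1 / Qr) / D') / 4 := by
  subst hD'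
  field_simp
  have e1 : Qs * Qs⁻¹ = 1 := mul_inv_cancel₀ hqs
  have e2 : Qr * Qr⁻¹ = 1 := mul_inv_cancel₀ hqr
  have e3 : D * D⁻¹ = 1 := mul_inv_cancel₀ hd
  have hX : Qs ^ 2 * Qr ^ 2 * D ^ 2 * Qs⁻¹ ^ 2 * Qr⁻¹ ^ 2 * D⁻¹ ^ 2 = 1 := by
    calc Qs ^ 2 * Qr ^ 2 * D ^ 2 * Qs⁻¹ ^ 2 * Qr⁻¹ ^ 2 * D⁻¹ ^ 2
        = (Qs * Qs⁻¹) ^ 2 * (Qr * Qr⁻¹) ^ 2 * (D * D⁻¹) ^ 2 := by ring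
      _ = 1 := by rw [e1, e2, e3]; ring
  linear_combination

lemma alg_minus (linf A1 A2 B1 B2 Qr Qs D D' : ℂ)
    (hb1 : B1 ≠ 0) (hb2 : B2 ≠ 0) (hqr : Qr ≠ 0) (hqs : Qs ≠ 0) (hd : D ≠ 0)
    (hD' : D' = -D) :
    -(linf / 8) * (B1 / Qr) * (B2 / Qs) * ((A2 / B2 - A1 / B1) / D)
      = (linf / 2 * (A1 / Qr) * (B2 / Qs) / D + linf / 2 * (A2 / Qs) * (B1 / Qr) / D') / 4 := by
  subst hD'
  field_simp
  have e1 : Qs * Qs⁻¹ = 1 := mul_inv_cancel₀ hqs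
  have e2 : Qr * Qr⁻¹ = 1 := mul_inv_cancel₀ hqr
  have e3 : D * D⁻¹ = 1 := mul_inv_cancel₀ hd
  have hX : Qs ^ 2 * Qr ^ 2 * D ^ 2 * Qs⁻¹ ^ 2 * Qr⁻¹ ^ 2 * D⁻¹ ^ 2 = 1 := by
    calc Qs ^ 2 * Qr ^ 2 * D ^ 2 * Qs⁻¹ ^ 2 * Qr⁻¹ ^ 2 * D⁻¹ ^ 2
        = (Qs * Qs⁻¹) ^ 2 * (Qr * Qr⁻¹) ^ 2 * (D * D⁻¹) ^ 2 := by ring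
      _ = 1 := by rw [e1, e2, e3]; ring
  linear_combination

/-- **Off-diagonal coefficient identity for the coupled σ-model action** (Equation (3.29)):
for `r ≠ s` and each choice of sign,
`c^±_{rs} := ±(ℓ^∞/8) φ^r_±(z_r) φ^s_±(z_s) Σ_{i∈I_±} φ_∓(ζ_i)/(φ_±'(ζ_i)(z_r-ζ_i)(z_s-ζ_i))`
equals `(ρ_{rs} + ρ_{sr})/4`. -/
theorem offdiagonal_coefficient_identity
    {N : ℕ} (hN : 1 ≤ N)
    (z : Fin N → ℂ) (ζ : Fin (2 * N) → ℂ)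
    (hdist : Function.Injective (Sum.elim z ζ : Fin N ⊕ Fin (2 * N) → ℂ))
    (Ip Im : Finset (Fin (2 * N)))
    (hdisj : Disjoint Ip Im) (hunion : Ip ∪ Im = Finset.univ)
    (hIp : Ip.card = N) (hIm : Im.card = N)
    (linf : ℂ)
    (r s : Fin N) (hrs : r ≠ s) :
    linf / 8 * phiHalfR z ζ Ip r (z r) * phiHalfR z ζ Ip s (z s) *
        ∑ i ∈ Ip, phiHalf z ζ Im (ζ i) /
          (deriv (phiHalf z ζ Ip) (ζ i) * ((z r - ζ i) * (z s - ζ i)))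
      = (rhoCoef linf z ζ Ip Im r s + rhoCoef linf z ζ Ip Im s r) / 4 ∧
    -(linf / 8) * phiHalfR z ζ Im r (z r) * phiHalfR z ζ Im s (z s) *
        ∑ i ∈ Im, phiHalf z ζ Ip (ζ i) /
          (deriv (phiHalf z ζ Im) (ζ i) * ((z r - ζ i) * (z s - ζ i)))
      = (rhoCoef linf z ζ Ip Im r s + rhoCoef linf z ζ Ip Im s r) / 4 := by
    classical
  have hzζ : ∀ (t : Fin N) (j : Fin (2 * N)), z t ≠ ζ j := by
    intro t j h
    have := hdist (a₁ := Sum.inl t) (a₂ := Sum.inr j) (by simpa using h)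
    simp at this
  have hzinj : Function.Injective z := by
    intro i j h
    have := hdist (a₁ := Sum.inl i) (a₂ := Sum.inl j) (by simpa using h)
    simpa using this
  have hd : z r - z s ≠ 0 := sub_ne_zero.mpr fun h => hrs (hzinj h)
  have ha1 : (∏ j ∈ Ip, (z r - ζ j)) ≠ 0 :=
    Finset.prod_ne_zero_iff.mpr fun j _ => sub_ne_zero.mpr (hzζ r j)
  have ha2 : (∏ j ∈ Ip, (z s - ζ j)) ≠ 0 :=
    Finset.prod_ne_zero_iff.mpr fun j _ => sub_ne_zero.mpr (hzζ s j)
  have hb1 : (∏ j ∈ Im, (z r - ζ j)) ≠ 0 :=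
    Finset.prod_ne_zero_iff.mpr fun j _ => sub_ne_zero.mpr (hzζ r j)
  have hb2 : (∏ j ∈ Im, (z s - ζ j)) ≠ 0 :=
    Finset.prod_ne_zero_iff.mpr fun j _ => sub_ne_zero.mpr (hzζ s j)
  have hqr : (∏ t ∈ Finset.univ.erase r, (z r - z t)) ≠ 0 :=
    Finset.prod_ne_zero_iff.mpr fun t ht =>
      sub_ne_zero.mpr fun h => (Finset.mem_erase.mp ht).1 (hzinj h).symm
  have hqs : (∏ t ∈ Finset.univ.erase s, (z s - z t)) ≠ 0 :=
    Finset.prod_ne_zero_iff.mpr fun t ht =>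
      sub_ne_zero.mpr fun h => (Finset.mem_erase.mp ht).1 (hzinj h).symm
  have hrho : rhoCoef linf z ζ Ip Im r s + rhoCoef linf z ζ Ip Im s r
      = linf / 2 * phiHalfR z ζ Ip r (z r) * phiHalfR z ζ Im s (z s) / (z r - z s)
        + linf / 2 * phiHalfR z ζ Ip s (z s) * phiHalfR z ζ Im r (z r) / (z s - z r) := by
    rw [rhoCoef, rhoCoef, if_neg hrs, if_neg hrs.symm]
  constructor
  · rw [main_half z ζ hdist Ip Im hIp hIm r s hrs, hrho]
    simp only [phiHalfR]
    exact alg_plus linf _ _ _ _ _ _ _ _ ha1 ha2 hqr hqs hd (by ring)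
  · rw [main_half z ζ hdist Im Ip hIm hIp r s hrs, hrho]
    simp only [phiHalfR]
    exact alg_minus linf _ _ _ _ _ _ _ _ hb1 hb2 hqr hqs hd (by ring)
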